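/- Let C be a class of finite simple graphs such that (1) whenever G ∈ C, every graph obtained from G by adding one new vertex adjacent to exactly one vertex of G is also in C, and (2) there is a function f : ℕ×ℕ → ℕ such that for every integer r ≥ 0, every G ∈ C and every A ⊆ V(G), |{N^r_G[v] ∩ A : v ∈ V(G)}| ≤ f(r,|A|). Then for every G ∈ C, every A ⊆ V(G) and every integer r ≥ 0, |Π_{r,G}[V(G) → A]| ≤ f(r,(r+1)·|A|). -/

import Mathlib

open SimpleGraph

/-- The ball of radius `r` around `v`: all vertices at (reachable) distance at most `r`. -/
def SimpleGraph.rBall {V : Type*} (G : SimpleGraph V) (v : V) (r : ℕ) : Set V :=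
  {u | G.edist v u ≤ r}

/-- The profile of `u` on `A` at distance `r`: maps `a ∈ A` to `dist_G(u,a)` if this is
at most `r`, and to `∞` otherwise. -/
noncomputable def SimpleGraph.profile {V : Type*} (G : SimpleGraph V) (r : ℕ) (A : Set V)
    (u : V) : A → ℕ∞ :=
  fun a => if G.edist u (a : V) ≤ r then G.edist u (a : V) else ⊤

/-- `Π_{r,G}[U → A]`: the set of distance-`r` profiles on `A` of vertices of `U`,
excluding the constant-`∞` profile. -/
noncomputable def SimpleGraph.profiles {V : Type*} (G : SimpleGraph V) (r : ℕ) (U A : Set V) :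
    Set (A → ℕ∞) :=
  {f | ∃ u ∈ U, f = G.profile r A u} \ {fun _ => ⊤}

/-- The graph obtained from `G` by adding one new vertex (`none`) adjacent to exactly the
vertex `v` of `G`. -/
def SimpleGraph.addPendant {V : Type} (G : SimpleGraph V) (v : V) : SimpleGraph (Option V) :=
  SimpleGraph.fromRel (fun x y =>
    (∃ a b, x = some a ∧ y = some b ∧ G.Adj a b) ∨ (x = none ∧ y = some v))

section AuxLemmas


lemma addPendant_adj_some_some {V : Type} (G : SimpleGraph V) (v a b : V) :
    (G.addPendant v).Adj (some a) (some b) ↔ G.Adj a b := by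
  constructor
  · rintro ⟨hne, h | h⟩ <;> rcases h with ⟨a', b', h1, h2, h3⟩ | ⟨h1, h2⟩ <;>
      simp_all <;> exact h3.symm
  · intro h; exact ⟨by simpa using h.ne, Or.inl (Or.inl ⟨a, b, rfl, rfl, h⟩)⟩

lemma addPendant_adj_none {V : Type} (G : SimpleGraph V) (v b : V) :
    (G.addPendant v).Adj none (some b) ↔ b = v := by
  constructor
  · rintro ⟨hne, h | h⟩ <;> rcases h with ⟨a', b', h1, h2, h3⟩ | ⟨h1, h2⟩ <;> simp_all
  · rintro rfl; exact ⟨by simp, Or.inl (Or.inr ⟨rfl, rfl⟩)⟩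

lemma addPendant_not_adj_none_none {V : Type} (G : SimpleGraph V) (v : V) :
    ¬ (G.addPendant v).Adj none none := fun h => h.ne rfl

/-- the inclusion homomorphism -/
def somHom {V : Type} (G : SimpleGraph V) (v : V) : G →g (G.addPendant v) where
  toFun := some
  map_rel' := fun h => (addPendant_adj_some_some G v _ _).mpr h

lemma addPendant_walk_proj {V : Type} (G : SimpleGraph V) (v : V) :
    ∀ (n : ℕ) (x y : V) (p : (G.addPendant v).Walk (some x) (some y)), p.length ≤ n →
      ∃ q : G.Walk x y, q.length ≤ p.length := by
  intro n
  induction n with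
  | zero =>
    intro x y p hp
    cases p with
    | nil => exact ⟨Walk.nil, by simp⟩
    | cons h p' => simp at hp
  | succ n ih =>
    intro x y p hp
    cases p with
    | nil => exact ⟨Walk.nil, by simp⟩
    | @cons _ w _ h p' =>
      cases w with
      | some c =>
        obtain ⟨q, hq⟩ := ih c y p' (by simpa using hp)
        exact ⟨Walk.cons ((addPendant_adj_some_some G v x c).mp h) q, by simp; omega⟩
      | none =>
        have hx : x = v := (addPendant_adj_none G v x).mp h.symm
        cases p' with
        | @cons _ w' _ h' p'' =>
          cases w' with
          | some c =>
            have hc : c = v := (addPendant_adj_none G v c).mp h'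
            obtain ⟨q, hq⟩ := ih c y p'' (by simp at hp ⊢; omega)
            subst hx hc
            exact ⟨q, by simp; omega⟩
          | none => exact absurd h' (addPendant_not_adj_none_none G v)

section
variable {V : Type} (G : SimpleGraph V) (v : V)



/-- push a walk of G into addPendant -/
def pushWalk : {x y : V} → G.Walk x y → (G.addPendant v).Walk (some x) (some y)
  | _, _, .nil => .nil
  | _, _, .cons h p => .cons ((addPendant_adj_some_some G v _ _).mpr h) (pushWalk p)

lemma pushWalk_length {x y : V} (p : G.Walk x y) : (pushWalk G v p).length = p.length := by
  induction p with
  | nil => rfl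
  | cons h p ih => simpa [pushWalk] using ih

lemma addPendant_edist_some_some (x y : V) :
    (G.addPendant v).edist (some x) (some y) = G.edist x y := by
  apply le_antisymm
  · rcases eq_or_ne (G.edist x y) ⊤ with h | h
    · simp [h]
    · obtain ⟨p, hp⟩ := exists_walk_of_edist_ne_top h
      rw [← hp, ← pushWalk_length G v p]
      exact edist_le _
  · rcases eq_or_ne ((G.addPendant v).edist (some x) (some y)) ⊤ with h | h
    · simp [h]
    · obtain ⟨p, hp⟩ := exists_walk_of_edist_ne_top h
      obtain ⟨q, hq⟩ := addPendant_walk_proj G v p.length x y p le_rfl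
      rw [← hp]
      exact le_trans (edist_le _) (by exact_mod_cast hq)

lemma addPendant_edist_some_none (x : V) :
    (G.addPendant v).edist (some x) none = G.edist x v + 1 := by
  apply le_antisymm
  · rcases eq_or_ne (G.edist x v) ⊤ with h | h
    · simp [h]
    · obtain ⟨p, hp⟩ := exists_walk_of_edist_ne_top h
      have hadj : (G.addPendant v).Adj (some v) none :=
        ((addPendant_adj_none G v v).mpr rfl).symm
      have := edist_le ((pushWalk G v p).concat hadj)
      rw [Walk.length_concat, pushWalk_length] at this
      rw [← hp]
      exact le_trans this (by push_cast; rfl)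
  · rcases eq_or_ne ((G.addPendant v).edist (some x) none) ⊤ with h | h
    · simp [h]
    · obtain ⟨p, hp⟩ := exists_walk_of_edist_ne_top h
      rw [← hp]
      -- reverse p : Walk none (some x)
      cases hrev : p.reverse with
      | @cons _ w _ h' p' =>
        cases w with
        | some c =>
          have hc : c = v := (addPendant_adj_none G v c).mp h'
          subst hc
          obtain ⟨q, hq⟩ := addPendant_walk_proj G c p'.length c x p' le_rfl
          have hle : G.edist x c ≤ q.length := by
            rw [SimpleGraph.edist_comm]; exact edist_le q
          have hlen : p'.length + 1 = p.length := by
            have := congrArg Walk.length hrev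
            simp at this; omega
          calc G.edist x c + 1 ≤ (q.length : ℕ∞) + 1 := by
                exact add_le_add hle le_rfl
            _ ≤ (p'.length : ℕ∞) + 1 := by exact_mod_cast Nat.add_le_add_right hq 1
            _ = (p.length : ℕ∞) := by rw [← hlen]; push_cast; ring
        | none => exact absurd h' (addPendant_not_adj_none_none G v)
end



-- ℕ∞ helper
lemma enat_helper {r : ℕ} {x y : ℕ∞} (hx : x ≤ r ∨ x = ⊤) (hy : y ≤ r ∨ y = ⊤)
    (h : ∀ i : ℕ, i ≤ r → (x + i ≤ r ↔ y + i ≤ r)) : x = y := by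
  have key : ∀ {a b : ℕ∞}, a ≤ r → (b ≤ r ∨ b = ⊤) →
      (∀ i : ℕ, i ≤ r → (a + i ≤ r ↔ b + i ≤ r)) → b ≤ a := by
    intro a b ha hb hab
    lift a to ℕ using (ha.trans_lt (by simp)).ne
    have har : a ≤ r := by exact_mod_cast ha
    have h1 : (a : ℕ∞) + (r - a : ℕ) ≤ r := by
      rw [← Nat.cast_add]
      exact_mod_cast Nat.le_of_eq (by omega)
    have h2 := (hab (r - a) (by omega)).mp h1
    rcases hb with hb | hb
    · lift b to ℕ using (hb.trans_lt (by simp)).ne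
      rw [← Nat.cast_add] at h2
      have : b + (r - a) ≤ r := by exact_mod_cast h2
      exact_mod_cast (by omega : b ≤ a)
    · rw [hb] at h2; simp at h2
  rcases hx with hx' | hx' <;> rcases hy with hy' | hy'
  · exact le_antisymm (key hy' (Or.inl hx') (fun i hi => (h i hi).symm)) (key hx' (Or.inl hy') h)
  · have hx'' : x = ⊤ := top_le_iff.mp (hy' ▸ key hx' (Or.inr hy') h)
    exact absurd (hx'' ▸ hx') (ENat.coe_lt_top r).not_ge
  · have hy'' : y = ⊤ := top_le_iff.mp (hx' ▸ key hy' (Or.inr hx') (fun i hi => (h i hi).symm))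
    exact absurd (hy'' ▸ hy') (ENat.coe_lt_top r).not_ge
  · rw [hx', hy']

lemma ncard_prod_Iic {V : Type} [Fintype V] (A : Set V) (r : ℕ) :
    (A ×ˢ (Set.Iic r)).ncard = A.ncard * (r + 1) := by
  have h1 : (Set.Iic r : Set ℕ) = ↑(Finset.Iic r) := by simp
  have : (A ×ˢ (Set.Iic r)).ncard = Nat.card (A ×ˢ (Set.Iic r) : Set (V × ℕ)) := rfl
  rw [this, Nat.card_congr (Equiv.Set.prod A (Set.Iic r)), Nat.card_prod]
  rw [Nat.card_coe_set_eq, Nat.card_coe_set_eq, h1, Set.ncard_coe_finset]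
  simp


structure St (C : ∀ (V : Type) [Fintype V], SimpleGraph V → Prop)
    (V : Type) [Fintype V] (G : SimpleGraph V) : Type 1 where
  W : Type
  fW : Fintype W
  H : SimpleGraph W
  hC : @C W fW H
  ι : V → W
  hedist : ∀ u w : V, H.edist (ι u) (ι w) = G.edist u w
  c : V → ℕ → W
  hc0 : ∀ b, c b 0 = ι b
  dset : Set (V × ℕ)
  hcd : ∀ p ∈ dset, ∀ u : V, H.edist (ι u) (c p.1 p.2) = G.edist u p.1 + p.2

section
variable {C : ∀ (V : Type) [Fintype V], SimpleGraph V → Prop}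
variable (hclosed : ∀ (V : Type) [Fintype V] (G : SimpleGraph V),
      C V G → ∀ v : V, C (Option V) (G.addPendant v))
variable {V : Type} [Fintype V] {G : SimpleGraph V}
include hclosed

lemma St.step (S : St C V G) (a : V) (n : ℕ)
    (hn : ∀ u, S.H.edist (S.ι u) (S.c a n) = G.edist u a + n) :
    ∃ S' : St C V G, S'.dset = insert (a, n+1) S.dset := by
  classical
  letI := S.fW
  refine ⟨{
    W := Option S.W
    fW := inferInstance
    H := S.H.addPendant (S.c a n)
    hC := hclosed S.W S.H S.hC (S.c a n)
    ι := fun u => some (S.ι u)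
    hedist := fun u w => by
      rw [addPendant_edist_some_some]; exact S.hedist u w
    c := fun b j => if b = a ∧ j = n+1 then none else some (S.c b j)
    hc0 := fun b => by simp [S.hc0]
    dset := insert (a, n+1) S.dset
    hcd := ?_ }, rfl⟩
  rintro ⟨b, j⟩ hp u
  dsimp only
  by_cases hba : b = a ∧ j = n + 1
  · obtain ⟨rfl, rfl⟩ := hba
    rw [if_pos (⟨rfl, rfl⟩ : b = b ∧ n+1 = n+1)]
    rw [addPendant_edist_some_none, hn u]
    push_cast; ring
  · have hmem : (b, j) ∈ S.dset := by
      rcases Set.mem_insert_iff.mp hp with h | h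
      · exact absurd (by simpa using h) hba
      · exact h
    simp only [if_neg hba]
    rw [addPendant_edist_some_some]
    exact S.hcd (b, j) hmem u

lemma St.chain (S : St C V G) (a : V) (n : ℕ) :
    ∃ S' : St C V G, S.dset ⊆ S'.dset ∧ ∀ i, 1 ≤ i → i ≤ n → (a, i) ∈ S'.dset := by
  induction n with
  | zero => exact ⟨S, subset_rfl, by omega⟩
  | succ n ih =>
    obtain ⟨S', hsub, hmem⟩ := ih
    have hn : ∀ u, S'.H.edist (S'.ι u) (S'.c a n) = G.edist u a + n := by
      rcases Nat.eq_zero_or_pos n with rfl | hpos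
      · intro u; rw [S'.hc0, S'.hedist]; simp
      · exact S'.hcd (a, n) (hmem n hpos le_rfl)
    obtain ⟨S'', hS''⟩ := St.step hclosed S' a n hn
    refine ⟨S'', hsub.trans (hS'' ▸ Set.subset_insert _ _), fun i h1 h2 => ?_⟩
    rw [hS'']
    rcases Nat.lt_or_ge i (n+1) with h | h
    · exact Set.mem_insert_iff.mpr (Or.inr (hmem i h1 (by omega)))
    · have : i = n + 1 := by omega
      subst this; exact Set.mem_insert _ _

lemma St.build (S : St C V G) (r : ℕ) (l : List V) :
    ∃ S' : St C V G, S.dset ⊆ S'.dset ∧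
      ∀ a ∈ l, ∀ i, 1 ≤ i → i ≤ r → (a, i) ∈ S'.dset := by
  induction l generalizing S with
  | nil => exact ⟨S, subset_rfl, by simp⟩
  | cons a l ih =>
    obtain ⟨S', hsub, hmem⟩ := St.chain hclosed S a r
    obtain ⟨S'', hsub', hmem'⟩ := ih S'
    refine ⟨S'', hsub.trans hsub', fun b hb i h1 h2 => ?_⟩
    rcases List.mem_cons.mp hb with rfl | hb
    · exact hsub' (hmem i h1 h2)
    · exact hmem' b hb i h1 h2
end


end AuxLemmas

/-- If a class `C` of finite graphs is closed under adding a pendant vertex, and the number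
of distinct ball traces on any `A` is at most `f(r,|A|)` for graphs in `C`, then
`|Π_{r,G}[V(G) → A]| ≤ f(r,(r+1)·|A|)` for every `G ∈ C`. -/
theorem profiles_of_ball_traces
    (C : ∀ (V : Type) [Fintype V], SimpleGraph V → Prop)
    (hclosed : ∀ (V : Type) [Fintype V] (G : SimpleGraph V),
      C V G → ∀ v : V, C (Option V) (G.addPendant v))
    (f : ℕ → ℕ → ℕ)
    (hf : ∀ (r : ℕ) (V : Type) [Fintype V] (G : SimpleGraph V), C V G → ∀ A : Set V,
      {S : Set V | ∃ v : V, S = G.rBall v r ∩ A}.ncard ≤ f r A.ncard)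
    (V : Type) [Fintype V] (G : SimpleGraph V) (hG : C V G) (A : Set V) (r : ℕ) :
    (G.profiles r Set.univ A).ncard ≤ f r ((r + 1) * A.ncard) := by
  classical
  set S₀ : St C V G :=
    { W := V
      fW := inferInstance
      H := G
      hC := hG
      ι := id
      hedist := fun u w => rfl
      c := fun b _ => b
      hc0 := fun b => rfl
      dset := ∅
      hcd := by simp } with hS₀
  obtain ⟨S, -, hmem⟩ := St.build hclosed S₀ r (A.toFinite.toFinset.toList)
  letI := S.fW
  have D : ∀ a ∈ A, ∀ i ≤ r, ∀ u : V,
      S.H.edist (S.ι u) (S.c a i) = G.edist u a + i := by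
    intro a ha i hi u
    rcases Nat.eq_zero_or_pos i with rfl | hpos
    · rw [S.hc0, S.hedist]; simp
    · exact S.hcd (a, i)
        (hmem a (by rw [Finset.mem_toList, Set.Finite.mem_toFinset]; exact ha) i hpos hi) u
  have cinj : Set.InjOn (fun p : V × ℕ => S.c p.1 p.2) (A ×ˢ Set.Iic r) := by
    rintro ⟨a, i⟩ hai ⟨b, j⟩ hbj hcc
    obtain ⟨ha, hi⟩ := Set.mem_prod.mp hai
    obtain ⟨hb, hj⟩ := Set.mem_prod.mp hbj
    simp only [Set.mem_Iic] at hi hj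
    dsimp only at hcc ⊢
    have h1 := D a ha i hi a
    have h2 := D b hb j hj a
    have h3 := D a ha i hi b
    have h4 := D b hb j hj b
    rw [hcc, h2] at h1
    rw [hcc, h4] at h3
    rw [SimpleGraph.edist_self] at h1 h3
    rw [zero_add] at h1 h3
    -- h1 : G.edist a b + j = i ; h3 : j = G.edist b a + i
    have hd : G.edist a b ≠ ⊤ := by
      intro h; rw [h, top_add] at h1; exact (ENat.coe_ne_top i) h1.symm
    lift G.edist a b to ℕ using hd with d hdeq
    rw [SimpleGraph.edist_comm, ← hdeq] at h3
    have e1 : d + j = i := by exact_mod_cast h1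
    have e2 : j = d + i := by exact_mod_cast h3
    have hd0 : d = 0 := by omega
    have hij : i = j := by omega
    have hab : a = b := by
      rw [← SimpleGraph.edist_eq_zero_iff (G := G), ← hdeq, hd0]; rfl
    rw [hab, hij]
  set A' : Set S.W := (fun p : V × ℕ => S.c p.1 p.2) '' (A ×ˢ Set.Iic r) with hA'
  have hA'card : A'.ncard = (r + 1) * A.ncard := by
    rw [hA', Set.ncard_image_of_injOn cinj, ncard_prod_Iic, Nat.mul_comm]
  set T : (A → ℕ∞) → Set S.W :=
    fun p => {w | ∃ a : A, ∃ i : ℕ, i ≤ r ∧ w = S.c a i ∧ p a + i ≤ (r : ℕ∞)} with hT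
  have hadm : ∀ (u : V) (a : A), G.profile r A u a ≤ r ∨ G.profile r A u a = ⊤ := by
    intro u a
    unfold SimpleGraph.profile
    by_cases h : G.edist u (a : V) ≤ r
    · left; rw [if_pos h]; exact h
    · right; rw [if_neg h]
  have hprofi : ∀ (u : V) (a : A) (i : ℕ),
      (G.edist u (a : V) + i ≤ (r : ℕ∞) ↔ G.profile r A u a + i ≤ (r : ℕ∞)) := by
    intro u a i
    unfold SimpleGraph.profile
    by_cases h : G.edist u (a : V) ≤ r
    · rw [if_pos h]
    · rw [if_neg h]
      constructor
      · intro hle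
        exact absurd (le_trans (le_add_right le_rfl) hle) h
      · intro hle
        rw [top_add] at hle
        exact absurd (le_trans le_top hle) h
  have hmemT : ∀ u : V, S.H.rBall (S.ι u) r ∩ A' = T (G.profile r A u) := by
    intro u
    ext w
    simp only [hT, hA', SimpleGraph.rBall, Set.mem_inter_iff, Set.mem_setOf_eq, Set.mem_image]
    constructor
    · rintro ⟨hball, ⟨⟨a, i⟩, haimem, rfl⟩⟩
      obtain ⟨ha, hi⟩ := Set.mem_prod.mp haimem
      simp only [Set.mem_Iic] at hi
      refine ⟨⟨a, ha⟩, i, hi, rfl, ?_⟩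
      rw [← hprofi u ⟨a, ha⟩ i, ← D a ha i hi u]
      exact hball
    · rintro ⟨⟨a, ha⟩, i, hi, rfl, hp⟩
      rw [← hprofi u ⟨a, ha⟩ i] at hp
      refine ⟨?_, ⟨(a, i), Set.mem_prod.mpr ⟨ha, Set.mem_Iic.mpr hi⟩, rfl⟩⟩
      rw [D a ha i hi u]
      exact hp
  have hTinj : Set.InjOn T (G.profiles r Set.univ A) := by
    rintro p₁ ⟨⟨u₁, -, rfl⟩, -⟩ p₂ ⟨⟨u₂, -, rfl⟩, -⟩ hTeq
    funext a
    apply enat_helper (hadm u₁ a) (hadm u₂ a)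
    intro i hi
    have key : ∀ u : V, S.c (a : V) i ∈ T (G.profile r A u) ↔
        G.profile r A u a + i ≤ (r : ℕ∞) := by
      intro u
      constructor
      · rintro ⟨⟨b, hb⟩, j, hj, hcc, hple⟩
        have heq : ((b : V), j) = ((a : V), i) :=
          cinj (Set.mem_prod.mpr ⟨hb, Set.mem_Iic.mpr hj⟩)
            (Set.mem_prod.mpr ⟨a.2, Set.mem_Iic.mpr hi⟩) (by simpa using hcc.symm)
        have h1 : b = (a : V) := congrArg Prod.fst heq
        have h2 : j = i := congrArg Prod.snd heq
        have hba : (⟨b, hb⟩ : A) = a := Subtype.ext h1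
        rw [← hba, ← h2]
        exact hple
      · intro h
        exact ⟨a, i, hi, rfl, h⟩
    constructor
    · intro h
      exact (key u₂).mp (hTeq ▸ (key u₁).mpr h)
    · intro h
      exact (key u₁).mp (hTeq.symm ▸ (key u₂).mpr h)
  have himg : T '' (G.profiles r Set.univ A) ⊆
      {S' : Set S.W | ∃ w, S' = S.H.rBall w r ∩ A'} := by
    rintro _ ⟨p, ⟨⟨u, -, rfl⟩, -⟩, rfl⟩
    exact ⟨S.ι u, (hmemT u).symm⟩
  calc (G.profiles r Set.univ A).ncard
      = (T '' (G.profiles r Set.univ A)).ncard := (Set.ncard_image_of_injOn hTinj).symm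
    _ ≤ {S' : Set S.W | ∃ w, S' = S.H.rBall w r ∩ A'}.ncard :=
        Set.ncard_le_ncard himg (Set.toFinite _)
    _ ≤ f r A'.ncard := hf r S.W S.H S.hC A'
    _ = f r ((r + 1) * A.ncard) := by rw [hA'card]
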